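/- arXiv:1111.3092 — 4 statements merged into one kernel-verified Lean document; each statement's English description precedes it below -/
import Mathlib

section
/- Let k ≥ 1 and let β_1, ..., β_k be positive real numbers with β_1 + β_2 + ... + β_k = π/2. Then cot(β_1/2) + cot(β_2/2) + ... + cot(β_k/2) ≥ k·cot(π/(4k)) ≥ k. -/
open Real

private lemma hasDerivAt_cot' {x : ℝ} (h : Real.sin x ≠ 0) :
    HasDerivAt Real.cot (-1 / Real.sin x ^ 2) x := by
  have hd := (Real.hasDerivAt_cos x).div (Real.hasDerivAt_sin x) h
  have : Real.cot = fun y => Real.cos y / Real.sin y := by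
    funext y; exact Real.cot_eq_cos_div_sin y
  rw [this]
  convert hd using 1
  all_goals try rfl
  have := Real.sin_sq_add_cos_sq x
  show _ = (-Real.sin x * Real.sin x - Real.cos x * Real.cos x) / Real.sin x ^ 2
  field_simp
  nlinarith [this, Real.sin_sq_add_cos_sq x]

private lemma convexOn_cot : ConvexOn ℝ (Set.Ioo 0 (π / 2)) Real.cot := by
  have hsin : ∀ x ∈ Set.Ioo 0 (π / 2), Real.sin x ≠ 0 := by
    intro x hx
    exact ne_of_gt (Real.sin_pos_of_pos_of_lt_pi hx.1 (by linarith [hx.2, Real.pi_pos]))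
  have hint : interior (Set.Ioo 0 (π / 2)) = Set.Ioo 0 (π / 2) := isOpen_Ioo.interior_eq
  apply MonotoneOn.convexOn_of_deriv (convex_Ioo _ _)
  · have : ∀ x ∈ Set.Ioo 0 (π/2), Real.cot x = Real.cos x / Real.sin x := fun x _ =>
      Real.cot_eq_cos_div_sin x
    exact ContinuousOn.congr (Real.continuous_cos.continuousOn.div
      Real.continuous_sin.continuousOn hsin) this
  · rw [hint]
    intro x hx
    exact (hasDerivAt_cot' (hsin x hx)).differentiableAt.differentiableWithinAt
  · rw [hint]
    intro x hx y hy hxy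
    rw [(hasDerivAt_cot' (hsin x hx)).deriv, (hasDerivAt_cot' (hsin y hy)).deriv]
    have hsx : 0 < Real.sin x := Real.sin_pos_of_pos_of_lt_pi hx.1 (by linarith [hx.2, Real.pi_pos])
    have hsy : 0 < Real.sin y := Real.sin_pos_of_pos_of_lt_pi hy.1 (by linarith [hy.2, Real.pi_pos])
    have : Real.sin x ≤ Real.sin y :=
      Real.sin_le_sin_of_le_of_le_pi_div_two (by linarith [hx.1, Real.pi_pos]) hy.2.le hxy
    have h2 : Real.sin x ^ 2 ≤ Real.sin y ^ 2 := by nlinarith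
    have : (1:ℝ) / Real.sin y ^ 2 ≤ 1 / Real.sin x ^ 2 :=
      one_div_le_one_div_of_le (by positivity) h2
    simp only [neg_div]
    linarith

private lemma one_le_cot {x : ℝ} (hx0 : 0 < x) (hx : x ≤ π / 4) : 1 ≤ Real.cot x := by
  have hpi := Real.pi_pos
  have hsx : 0 < Real.sin x := Real.sin_pos_of_pos_of_lt_pi hx0 (by linarith)
  have h1 : Real.sin x ≤ Real.sin (π / 4) :=
    Real.sin_le_sin_of_le_of_le_pi_div_two (by linarith) (by linarith) hx
  have h2 : Real.cos (π / 4) ≤ Real.cos x :=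
    Real.cos_le_cos_of_nonneg_of_le_pi hx0.le (by linarith) hx
  have h3 : Real.sin x ≤ Real.cos x := by
    rw [Real.sin_pi_div_four] at h1
    rw [Real.cos_pi_div_four] at h2
    linarith
  rw [Real.cot_eq_cos_div_sin]
  rw [le_div_iff₀ hsx]
  linarith

/-- If `β 0, …, β (k-1)` are positive reals summing to `π/2`
(with `k ≥ 1`), then `∑ cot (βᵢ/2) ≥ k · cot (π/(4k)) ≥ k`. -/
theorem sum_cot_ge_of_sum_eq_pi_div_two
    (k : ℕ) (hk : 1 ≤ k) (β : Fin k → ℝ)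
    (hpos : ∀ i, 0 < β i) (hsum : ∑ i, β i = π / 2) :
    (k : ℝ) * Real.cot (π / (4 * k)) ≤ ∑ i, Real.cot (β i / 2) ∧
      (k : ℝ) ≤ (k : ℝ) * Real.cot (π / (4 * k)) := by
  have hpi := Real.pi_pos
  have hkR : (0:ℝ) < k := by exact_mod_cast hk
  have hβle : ∀ i, β i ≤ π / 2 := by
    intro i
    rw [← hsum]
    exact Finset.single_le_sum (fun j _ => (hpos j).le) (Finset.mem_univ i)
  have hmem : ∀ i ∈ Finset.univ, β i / 2 ∈ Set.Ioo 0 (π / 2) := by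
    intro i _
    exact ⟨by linarith [hpos i], by linarith [hβle i]⟩
  have hJ := convexOn_cot.map_sum_le (t := Finset.univ) (w := fun _ : Fin k => 1 / (k:ℝ))
    (p := fun i => β i / 2) (fun i _ => by positivity)
    (by simp [Finset.sum_const, Finset.card_univ]; field_simp) hmem
  have hsum2 : ∑ i : Fin k, (1 / (k:ℝ)) • (β i / 2) = π / (4 * k) := by
    simp only [smul_eq_mul, ← Finset.mul_sum]
    rw [show ∑ i, β i / 2 = (∑ i, β i) / 2 by rw [Finset.sum_div], hsum]
    field_simp; ring_nf
    try exact Or.inl trivial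
  rw [hsum2] at hJ
  have hJ' : (k:ℝ) * Real.cot (π / (4 * k)) ≤ ∑ i, Real.cot (β i / 2) := by
    have : ∑ i : Fin k, (1 / (k:ℝ)) • Real.cot (β i / 2)
        = (1 / (k:ℝ)) * ∑ i, Real.cot (β i / 2) := by
      simp [Finset.mul_sum]
    rw [this] at hJ
    rw [← mul_le_mul_iff_right₀ (show (0:ℝ) < 1 / k by positivity)]
    calc (1/(k:ℝ)) * ((k:ℝ) * Real.cot (π / (4*k))) = Real.cot (π / (4*k)) := by
          field_simp
      _ ≤ (1/(k:ℝ)) * ∑ i, Real.cot (β i / 2) := hJ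
  refine ⟨hJ', ?_⟩
  have h1 : 1 ≤ Real.cot (π / (4 * k)) := by
    apply one_le_cot (by positivity)
    rw [div_le_div_iff₀ (by positivity) (by norm_num)]
    have hk1 : (1:ℝ) ≤ k := by exact_mod_cast hk
    nlinarith
  nlinarith
end

section
/- Let k ≥ 2 and let β_1, ..., β_k be positive real numbers with β_1 + β_2 + ... + β_k = π. Then cot(β_1/2) + cot(β_2/2) + ... + cot(β_k/2) ≥ k·cot(π/(2k)) ≥ k. -/
open Real

lemma cot_convexOn : ConvexOn ℝ (Set.Ioo 0 (π/2)) Real.cot := by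
  have hcong : ∀ x ∈ Set.Ioo 0 (π/2), Real.cot x = Real.cos x / Real.sin x := fun x _ =>
    Real.cot_eq_cos_div_sin x
  have hD : Convex ℝ (Set.Ioo 0 (π/2)) := convex_Ioo _ _
  have hint : interior (Set.Ioo 0 (π/2)) = Set.Ioo 0 (π/2) := isOpen_Ioo.interior_eq
  have key : ConvexOn ℝ (Set.Ioo 0 (π/2)) (fun x => Real.cos x / Real.sin x) := by
    apply convexOn_of_hasDerivWithinAt2_nonneg hD
      (f' := fun x => -(1 / Real.sin x ^ 2))
      (f'' := fun x => 2 * Real.cos x / Real.sin x ^ 3)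
    · exact (Real.continuous_cos.continuousOn).div Real.continuous_sin.continuousOn
        (fun x hx => ne_of_gt (Real.sin_pos_of_pos_of_lt_pi hx.1
          (lt_trans hx.2 (by linarith [Real.pi_pos]))))
    · intro x hx
      rw [hint] at hx
      have hs : Real.sin x ≠ 0 := ne_of_gt (Real.sin_pos_of_pos_of_lt_pi hx.1
        (lt_trans hx.2 (by linarith [Real.pi_pos])))
      have h : HasDerivAt (fun x => Real.cos x / Real.sin x)
          ((-Real.sin x * Real.sin x - Real.cos x * Real.cos x) / Real.sin x ^ 2) x :=
        (Real.hasDerivAt_cos x).div (Real.hasDerivAt_sin x) hs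
      have : (-Real.sin x * Real.sin x - Real.cos x * Real.cos x) / Real.sin x ^ 2
          = -(1 / Real.sin x ^ 2) := by
        have hpy := Real.sin_sq_add_cos_sq x
        field_simp
        linarith
      rw [this] at h
      exact h.hasDerivWithinAt
    · intro x hx
      rw [hint] at hx
      have hs : 0 < Real.sin x := Real.sin_pos_of_pos_of_lt_pi hx.1
        (lt_trans hx.2 (by linarith [Real.pi_pos]))
      have h2 : HasDerivAt (fun x => Real.sin x ^ 2)
          (2 * Real.sin x ^ 1 * Real.cos x) x := (Real.hasDerivAt_sin x).pow 2
      have h3 : HasDerivAt (fun x => (Real.sin x ^ 2)⁻¹)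
          (-(2 * Real.sin x ^ 1 * Real.cos x) / (Real.sin x ^ 2) ^ 2) x :=
        h2.inv (by positivity)
      have h4 : HasDerivAt (fun x => -(1 / Real.sin x ^ 2))
          (-(-(2 * Real.sin x ^ 1 * Real.cos x) / (Real.sin x ^ 2) ^ 2)) x := by
        simpa only [one_div, Pi.neg_def] using h3.neg
      have : -(-(2 * Real.sin x ^ 1 * Real.cos x) / (Real.sin x ^ 2) ^ 2)
          = 2 * Real.cos x / Real.sin x ^ 3 := by
        rw [neg_div, neg_neg]
        rw [div_eq_div_iff (by positivity) (by positivity)]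
        ring
      rw [this] at h4
      exact h4.hasDerivWithinAt
    · intro x hx
      rw [hint] at hx
      have hs : 0 < Real.sin x := Real.sin_pos_of_pos_of_lt_pi hx.1
        (lt_trans hx.2 (by linarith [Real.pi_pos]))
      have hc : 0 ≤ Real.cos x := Real.cos_nonneg_of_mem_Icc ⟨by linarith [Real.pi_pos, hx.1], le_of_lt hx.2⟩
      positivity
  exact key.congr (fun x hx => (hcong x hx).symm)

lemma one_le_cot_of_le_pi_div_four {x : ℝ} (hx : 0 < x) (hx' : x ≤ π/4) :
    1 ≤ Real.cot x := by
  have hs : 0 < Real.sin x := Real.sin_pos_of_pos_of_lt_pi hx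
    (lt_of_le_of_lt hx' (by linarith [Real.pi_pos]))
  have hle : Real.sin x ≤ Real.cos x := by
    rw [← Real.sin_pi_div_two_sub]
    apply Real.sin_le_sin_of_le_of_le_pi_div_two (by linarith) (by linarith) (by linarith)
  rw [Real.cot_eq_cos_div_sin, le_div_iff₀ hs, one_mul]
  exact hle

/-- If `β 0, …, β (k-1)` are positive reals summing to `π`
(with `k ≥ 2`), then `∑ cot (βᵢ/2) ≥ k · cot (π/(2k)) ≥ k`. -/
theorem sum_cot_ge_of_sum_eq_pi
    (k : ℕ) (hk : 2 ≤ k) (β : Fin k → ℝ)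
    (hpos : ∀ i, 0 < β i) (hsum : ∑ i, β i = π) :
    (k : ℝ) * Real.cot (π / (2 * k)) ≤ ∑ i, Real.cot (β i / 2) ∧
      (k : ℝ) ≤ (k : ℝ) * Real.cot (π / (2 * k)) := by
  have hk0 : (0 : ℝ) < k := by positivity
  have hβlt : ∀ i, β i < π := by
    intro i
    obtain ⟨j, hj⟩ : ∃ j : Fin k, j ≠ i := by
      have : Nontrivial (Fin k) := Fin.nontrivial_iff_two_le.mpr hk
      exact exists_ne i
    have h1 : β i + β j ≤ ∑ l, β l := by
      have := Finset.add_sum_erase Finset.univ β (Finset.mem_univ i)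
      calc β i + β j ≤ β i + ∑ l ∈ Finset.univ.erase i, β l := by
            apply add_le_add_right
            exact Finset.single_le_sum (fun l _ => (hpos l).le)
              (Finset.mem_erase.mpr ⟨hj, Finset.mem_univ j⟩)
        _ = ∑ l, β l := this
    rw [hsum] at h1
    linarith [hpos j]
  have hmem : ∀ i : Fin k, β i / 2 ∈ Set.Ioo 0 (π/2) := fun i =>
    ⟨by linarith [hpos i], by linarith [hβlt i]⟩
  -- Jensen
  have hw : ∑ _i : Fin k, (1 / (k:ℝ)) = 1 := by
    rw [Finset.sum_const, Finset.card_univ, Fintype.card_fin, nsmul_eq_mul]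
    field_simp
  have hJ := cot_convexOn.map_sum_le (t := Finset.univ) (w := fun _ => 1/(k:ℝ))
    (p := fun i => β i / 2) (fun i _ => by positivity) hw (fun i _ => hmem i)
  have hsum2 : ∑ i : Fin k, (1/(k:ℝ)) • (β i / 2) = π / (2*k) := by
    simp only [smul_eq_mul, ← Finset.mul_sum]
    rw [show ∑ i : Fin k, β i / 2 = (∑ i, β i) / 2 by rw [Finset.sum_div], hsum]
    ring
  rw [hsum2] at hJ
  simp only [smul_eq_mul, ← Finset.mul_sum] at hJ
  constructor
  · calc (k:ℝ) * Real.cot (π / (2*k)) ≤ (k:ℝ) * (1/(k:ℝ) * ∑ i, Real.cot (β i / 2)) := by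
          exact mul_le_mul_of_nonneg_left hJ hk0.le
    _ = ∑ i, Real.cot (β i / 2) := by field_simp
  · have h1 : 1 ≤ Real.cot (π / (2*k)) := by
      apply one_le_cot_of_le_pi_div_four
      · positivity
      · rw [div_le_div_iff₀ (by positivity) (by norm_num)]
        have : (2:ℝ) ≤ k := by exact_mod_cast hk
        nlinarith [Real.pi_pos]
    nlinarith
end

section
/- Let k ≥ 3 and let β_1, ..., β_k be real numbers with 0 < β_i ≤ π for each i and β_1 + β_2 + ... + β_k = 2π. Then cot(β_1/2) + cot(β_2/2) + ... + cot(β_k/2) ≥ k·cot(π/k) ≥ k/√3. -/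
open Real

lemma cot_half_convexOn : ConvexOn ℝ (Set.Ioc 0 π) (fun x : ℝ => Real.cot (x / 2)) := by
  have hpi := Real.pi_pos
  have hsinpos : ∀ x ∈ Set.Ioc (0:ℝ) π, 0 < Real.sin (x / 2) := by
    intro x hx
    exact Real.sin_pos_of_pos_of_lt_pi (by linarith [hx.1]) (by linarith [hx.2])
  apply convexOn_of_hasDerivWithinAt2_nonneg (f' := fun x => -(1/2) / Real.sin (x/2) ^ 2)
      (f'' := fun x => Real.cos (x/2) / (2 * Real.sin (x/2) ^ 3)) (convex_Ioc 0 π)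
  · -- continuity
    have : ∀ x ∈ Set.Ioc (0:ℝ) π, Real.cot (x / 2) = Real.cos (x/2) / Real.sin (x/2) := by
      intro x hx; rw [Real.cot_eq_cos_div_sin]
    refine ContinuousOn.congr ?_ this
    exact ((Real.continuous_cos.comp (continuous_id.div_const 2)).continuousOn).div
      ((Real.continuous_sin.comp (continuous_id.div_const 2)).continuousOn)
      (fun x hx => (hsinpos x hx).ne')
  · -- first derivative
    rw [interior_Ioc]
    intro x hx
    have hs : 0 < Real.sin (x/2) := hsinpos x (Set.Ioo_subset_Ioc_self hx)
    have hhalf : HasDerivAt (fun y : ℝ => y / 2) (1/2) x := (hasDerivAt_id x).div_const 2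
    have hcos : HasDerivAt (fun y : ℝ => Real.cos (y/2)) (-Real.sin (x/2) * (1/2)) x :=
      hhalf.cos
    have hsin : HasDerivAt (fun y : ℝ => Real.sin (y/2)) (Real.cos (x/2) * (1/2)) x :=
      hhalf.sin
    have hdiv := hcos.div hsin hs.ne'
    have heq : (-Real.sin (x/2) * (1/2) * Real.sin (x/2) -
        Real.cos (x/2) * (Real.cos (x/2) * (1/2))) / Real.sin (x/2) ^ 2
        = -(1/2) / Real.sin (x/2) ^ 2 := by
      have h := Real.sin_sq_add_cos_sq (x/2)
      field_simp
      nlinarith [h]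
    rw [heq] at hdiv
    have : HasDerivAt (fun y : ℝ => Real.cot (y / 2)) (-(1/2) / Real.sin (x/2) ^ 2) x := by
      refine hdiv.congr_of_eventuallyEq ?_
      have hopen : Set.Ioo (0:ℝ) (2*π) ∈ nhds x := by
        refine (isOpen_Ioo).mem_nhds ⟨hx.1, by linarith [hx.2]⟩
      filter_upwards [hopen] with y hy
      rw [Real.cot_eq_cos_div_sin]; rfl
    exact this.hasDerivWithinAt
  · -- second derivative
    rw [interior_Ioc]
    intro x hx
    have hs : 0 < Real.sin (x/2) := hsinpos x (Set.Ioo_subset_Ioc_self hx)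
    have hhalf : HasDerivAt (fun y : ℝ => y / 2) (1/2) x := (hasDerivAt_id x).div_const 2
    have hsin : HasDerivAt (fun y : ℝ => Real.sin (y/2)) (Real.cos (x/2) * (1/2)) x :=
      hhalf.sin
    have hsq : HasDerivAt (fun y : ℝ => Real.sin (y/2) ^ 2)
        ((2:ℕ) * Real.sin (x/2) ^ 1 * (Real.cos (x/2) * (1/2))) x := hsin.pow 2
    have hs2 : Real.sin (x/2) ^ 2 ≠ 0 := by positivity
    have hdiv := (hasDerivAt_const x (-(1/2) : ℝ)).div hsq hs2
    have heq : ((0 : ℝ) * (Real.sin (x/2) ^ 2) - (-(1/2)) *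
        ((2:ℕ) * Real.sin (x/2) ^ 1 * (Real.cos (x/2) * (1/2)))) / (Real.sin (x/2) ^ 2) ^ 2
        = Real.cos (x/2) / (2 * Real.sin (x/2) ^ 3) := by
      field_simp
      ring
    rw [heq] at hdiv
    exact hdiv.hasDerivWithinAt
  · -- nonnegativity of f''
    rw [interior_Ioc]
    intro x hx
    have hs : 0 < Real.sin (x/2) := hsinpos x (Set.Ioo_subset_Ioc_self hx)
    have hc : 0 ≤ Real.cos (x/2) :=
      Real.cos_nonneg_of_mem_Icc ⟨by linarith [hx.1, hpi], by linarith [hx.2]⟩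
    positivity

/-- If `β 0, …, β (k-1)` are reals with `0 < βᵢ ≤ π` summing
to `2π` (with `k ≥ 3`), then `∑ cot (βᵢ/2) ≥ k · cot (π/k) ≥ k/√3`. -/
theorem sum_cot_ge_of_sum_eq_two_pi
    (k : ℕ) (hk : 3 ≤ k) (β : Fin k → ℝ)
    (hpos : ∀ i, 0 < β i) (hle : ∀ i, β i ≤ π) (hsum : ∑ i, β i = 2 * π) :
    (k : ℝ) * Real.cot (π / k) ≤ ∑ i, Real.cot (β i / 2) ∧
      (k : ℝ) / Real.sqrt 3 ≤ (k : ℝ) * Real.cot (π / k) := by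
  have hpi := Real.pi_pos
  have hk0 : (0:ℝ) < k := by positivity
  have hk3 : (3:ℝ) ≤ k := by exact_mod_cast hk
  constructor
  · -- Jensen
    have hJ := cot_half_convexOn.map_sum_le (t := Finset.univ) (w := fun _ : Fin k => (k:ℝ)⁻¹)
      (p := β) (fun i _ => by positivity)
      (by simp [Finset.card_univ]; field_simp)
      (fun i _ => ⟨hpos i, hle i⟩)
    have hmean : (∑ i : Fin k, (k:ℝ)⁻¹ • β i) = 2 * π / k := by
      rw [← Finset.smul_sum, hsum]; simp [smul_eq_mul]; ring
    rw [hmean] at hJ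
    have : Real.cot (2 * π / k / 2) = Real.cot (π / k) := by ring_nf
    rw [this] at hJ
    have := mul_le_mul_of_nonneg_left hJ (le_of_lt hk0)
    calc (k : ℝ) * Real.cot (π / k) ≤ (k:ℝ) * ∑ i, (k:ℝ)⁻¹ • Real.cot (β i / 2) := this
      _ = ∑ i, Real.cot (β i / 2) := by
          rw [← Finset.smul_sum]; simp [smul_eq_mul]; field_simp
  · -- k/√3 ≤ k cot(π/k)
    have hkey : Real.sqrt 3⁻¹ ≤ Real.cot (π / k) := by
      have h1 : π / k ≤ π / 3 := by
        apply div_le_div_of_nonneg_left (le_of_lt hpi) (by norm_num) hk3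
      have h2 : 0 < π / k := by positivity
      have h3 : π / 3 < π / 2 := by linarith
      have hsk : 0 < Real.sin (π / k) := Real.sin_pos_of_pos_of_lt_pi h2 (by linarith)
      have hck : 0 ≤ Real.cos (π / k) :=
        Real.cos_nonneg_of_mem_Icc ⟨by linarith, by linarith⟩
      have hcos : Real.cos (π / 3) ≤ Real.cos (π / k) :=
        Real.cos_le_cos_of_nonneg_of_le_pi (le_of_lt h2) (by linarith) h1
      have hsin : Real.sin (π / k) ≤ Real.sin (π / 3) := by
        apply (Real.strictMonoOn_sin.monotoneOn) ⟨by linarith, by linarith⟩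
          ⟨by linarith, by linarith⟩ h1
      rw [Real.cot_eq_cos_div_sin]
      have : Real.cos (π/3) / Real.sin (π/3) ≤ Real.cos (π/k) / Real.sin (π/k) :=
        div_le_div₀ hck hcos hsk hsin
      refine le_trans (le_of_eq ?_) this
      rw [Real.cos_pi_div_three, Real.sin_pi_div_three, Real.sqrt_inv]
      have h33 : Real.sqrt 3 * Real.sqrt 3 = 3 := Real.mul_self_sqrt (by norm_num)
      have hs3 : Real.sqrt 3 ≠ 0 := by positivity
      field_simp
    have : (k:ℝ) / Real.sqrt 3 = (k:ℝ) * Real.sqrt 3⁻¹ := by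
      rw [Real.sqrt_inv]; ring
    rw [this]
    exact mul_le_mul_of_nonneg_left hkey (le_of_lt hk0)
end

section
/- Let T be a normal tiling of Euclidean 3-space with cells P_i containing the closed unit balls B_i. Then 0 < liminf_{L→∞} (4π/3)·card{i : B_i ⊆ C_L} / L³ ≤ limsup_{L→∞} (4π/3)·card{i : B_i ⊆ C_L} / L³ < 1. -/
open MeasureTheory Metric Filter

noncomputable section

/-- Euclidean 3-space. -/
abbrev E3 := EuclideanSpace ℝ (Fin 3)

/-- The surface area of a set: the 2-dimensional Hausdorff measure of its
topological boundary. -/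
def sarea (K : Set E3) : ℝ := (μH[2] (frontier K)).toReal

/-- The axis-parallel cube `[-L/2, L/2]³` centered at the origin. -/
def cube (L : ℝ) : Set E3 := {x : E3 | ∀ j, |x j| ≤ L / 2}

/-- A normal tiling of `ℝ³`: a countable family of compact convex cells `P i`
with nonempty interiors, pairwise disjoint interiors, whose union is all of
space, each containing the closed unit ball `B i` centered at `o i`, and with
uniformly bounded diameters. -/
structure NormalTiling where
  P : ℕ → Set E3
  o : ℕ → E3
  isCompact : ∀ i, IsCompact (P i)
  convex : ∀ i, Convex ℝ (P i)
  interior_nonempty : ∀ i, (interior (P i)).Nonempty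
  disjoint_interiors : ∀ i j, i ≠ j → Disjoint (interior (P i)) (interior (P j))
  iUnion_eq : (⋃ i, P i) = Set.univ
  ball_subset : ∀ i, closedBall (o i) 1 ⊆ P i
  bounded_diam : ∃ D : ℝ, ∀ i, diam (P i) ≤ D

/-- The number of cells of the tiling whose unit ball is contained in `C_L`. -/
def ballCount (T : NormalTiling) (L : ℝ) : ℕ :=
  Nat.card {i : ℕ | closedBall (T.o i) 1 ⊆ cube L}

/-- The (lower) average surface area of the cells of a normal tiling. -/
def avgSurfaceArea (T : NormalTiling) : ℝ :=
  liminf (fun L : ℝ =>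
    (∑ᶠ i ∈ {i : ℕ | closedBall (T.o i) 1 ⊆ cube L}, sarea (T.P i ∩ cube L)) /
      (ballCount T L : ℝ)) atTop

/-- The upper density of the underlying packing of unit balls. -/
def upperDensity (T : NormalTiling) : ℝ :=
  limsup (fun L : ℝ => (4 * Real.pi / 3) * (ballCount T L : ℝ) / L ^ 3) atTop

namespace St9

open scoped ENNReal NNReal

/-! ### Auxiliary geometric lemmas -/

lemma abs_coord_le_norm (x : E3) (j : Fin 3) : |x j| ≤ ‖x‖ := by
  rw [EuclideanSpace.norm_eq, ← Real.sqrt_sq_eq_abs]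
  apply Real.sqrt_le_sqrt
  have := Finset.single_le_sum (f := fun i => ‖x i‖ ^ 2)
    (fun i _ => by positivity) (Finset.mem_univ j)
  simpa [Real.norm_eq_abs, sq_abs] using this

lemma dist_coord (x y : E3) (j : Fin 3) : |x j - y j| ≤ dist x y := by
  have h : x j - y j = (x - y) j := rfl
  rw [h, dist_eq_norm]
  exact abs_coord_le_norm (x - y) j

lemma cube_absorb {M c : ℝ} {x y : E3} (hx : x ∈ cube M) (hc : dist y x ≤ c) :
    y ∈ cube (M + 2 * c) := by
  intro j
  have h1 := dist_coord y x j
  have h2 := hx j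
  have h3 : |y j| ≤ |x j| + |y j - x j| := by
    calc |y j| = |x j + (y j - x j)| := by ring_nf
    _ ≤ |x j| + |y j - x j| := abs_add_le _ _
  linarith

lemma cube_mono {L L' : ℝ} (h : L ≤ L') : cube L ⊆ cube L' := by
  intro x hx j
  exact (hx j).trans (by linarith)

lemma center_coord {x : E3} {L : ℝ} (h : closedBall x 1 ⊆ cube L) (j : Fin 3) :
    |x j| ≤ L / 2 - 1 := by
  have hmem : ∀ v : E3, ‖v‖ ≤ 1 → (x + v) ∈ cube L := by
    intro v hv
    apply h
    rw [mem_closedBall, dist_eq_norm, add_sub_cancel_left]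
    exact hv
  have hp := hmem (EuclideanSpace.single j (1:ℝ))
    (by rw [EuclideanSpace.norm_single]; norm_num) j
  have hm := hmem (-EuclideanSpace.single j (1:ℝ))
    (by rw [norm_neg, EuclideanSpace.norm_single]; norm_num) j
  have hp' : |x j + 1| ≤ L / 2 := by
    simpa [PiLp.add_apply, EuclideanSpace.single_apply] using hp
  have hm' : |x j - 1| ≤ L / 2 := by
    have : (x + -EuclideanSpace.single j (1:ℝ)) j = x j - 1 := by
      simp [PiLp.add_apply, PiLp.neg_apply, EuclideanSpace.single_apply]
      ring
    rw [this] at hm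
    exact hm
  rw [abs_le] at hp' hm' ⊢
  constructor <;> linarith

/-! ### Volumes -/

lemma volume_cube {L : ℝ} (hL : 0 ≤ L) : volume (cube L) = ENNReal.ofReal (L ^ 3) := by
  have h : cube L = (MeasurableEquiv.toLp 2 (Fin 3 → ℝ)).symm ⁻¹'
      (Set.univ.pi fun _ : Fin 3 => Set.Icc (-(L/2)) (L/2)) := by
    ext x
    rw [Set.mem_preimage, Set.mem_univ_pi]
    constructor
    · intro hx j
      exact Set.mem_Icc.mpr (abs_le.mp (hx j))
    · intro hx j
      exact abs_le.mpr (Set.mem_Icc.mp (hx j))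
  rw [h, (EuclideanSpace.volume_preserving_symm_measurableEquiv_toLp (Fin 3)).measure_preimage
    ((MeasurableSet.univ_pi fun _ => measurableSet_Icc).nullMeasurableSet)]
  rw [volume_pi_pi]
  have h2 : L / 2 - -(L/2) = L := by ring
  simp only [Real.volume_Icc, h2]
  rw [Finset.prod_const, Finset.card_univ, Fintype.card_fin, ← ENNReal.ofReal_pow hL]

lemma volume_closedBall3 (x : E3) {r : ℝ} (hr : 0 ≤ r) :
    volume (closedBall x r) = ENNReal.ofReal (4 * Real.pi / 3 * r ^ 3) := by
  rw [EuclideanSpace.volume_closedBall]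
  have hπ := Real.pi_pos
  simp only [Fintype.card_fin, Nat.cast_ofNat]
  have hg : Real.Gamma ((3:ℝ) / 2 + 1) = 3 / 4 * Real.sqrt Real.pi := by
    rw [Real.Gamma_add_one (by norm_num), show (3:ℝ)/2 = 1/2 + 1 by norm_num,
      Real.Gamma_add_one (by norm_num), Real.Gamma_one_half_eq]
    ring
  have hs3 : Real.sqrt Real.pi ^ (3:ℕ) = Real.pi * Real.sqrt Real.pi := by
    rw [show (3:ℕ) = 2 + 1 by norm_num, pow_succ, Real.sq_sqrt hπ.le]
  rw [hg, hs3]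
  have hs : Real.sqrt Real.pi ≠ 0 := by positivity
  have hfrac : Real.pi * Real.sqrt Real.pi / (3 / 4 * Real.sqrt Real.pi) = 4 * Real.pi / 3 := by
    field_simp
  rw [hfrac, ← ENNReal.ofReal_pow hr, ← ENNReal.ofReal_mul (by positivity), mul_comm]

lemma volume_ball3 (x : E3) {r : ℝ} (hr : 0 ≤ r) :
    volume (ball x r) = ENNReal.ofReal (4 * Real.pi / 3 * r ^ 3) := by
  rw [← Measure.addHaar_closedBall_eq_addHaar_ball]
  exact volume_closedBall3 x hr

lemma volume_unit_ball (x : E3) : volume (ball x 1) = ENNReal.ofReal (4 * Real.pi / 3) := by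
  simpa using volume_ball3 x zero_le_one

/-! ### Counting disjoint unit balls -/

lemma count_le {o : ℕ → E3} (ho : ∀ i j, i ≠ j → 2 ≤ dist (o i) (o j))
    {A : Set ℕ} {M : Set E3} {V : ℝ}
    (hsub : ∀ i ∈ A, ball (o i) 1 ⊆ M)
    (hvol : volume M ≤ ENNReal.ofReal V) (hV : 0 ≤ V) :
    A.Finite ∧ (A.ncard : ℝ) * (4 * Real.pi / 3) ≤ V := by
  classical
  have hπ := Real.pi_pos
  have hdis : A.PairwiseDisjoint (fun i => ball (o i) 1) := fun i _ j _ hij =>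
    ball_disjoint_ball (by linarith [ho i j hij])
  have hMtop : volume M ≠ ⊤ := (hvol.trans_lt ENNReal.ofReal_lt_top).ne
  have hUle : volume (⋃ i ∈ A, ball (o i) 1) ≤ volume M :=
    measure_mono (Set.iUnion₂_subset hsub)
  have hA : A.Finite := by
    by_contra hinf
    have hinf' : A.Infinite := hinf
    have h1 := measure_biUnion (μ := volume) A.to_countable hdis (fun i _ => measurableSet_ball)
    have h2 : ∑' i : A, volume (ball (o (i : ℕ)) 1) = ⊤ := by
      have hcong : ∑' i : A, volume (ball (o (i : ℕ)) 1)
          = ∑' _ : A, ENNReal.ofReal (4 * Real.pi / 3) :=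
        tsum_congr (fun i => volume_unit_ball (o (i : ℕ)))
      rw [hcong]
      have : Infinite A := hinf'.to_subtype
      refine ENNReal.tsum_const_eq_top_of_ne_zero ?_
      rw [Ne, ENNReal.ofReal_eq_zero, not_le]
      positivity
    rw [h1, h2] at hUle
    exact hMtop (top_le_iff.mp hUle)
  refine ⟨hA, ?_⟩
  have hset : (⋃ i ∈ hA.toFinset, ball (o i) 1) = ⋃ i ∈ A, ball (o i) 1 := by
    ext z; simp [hA.mem_toFinset]
  have h2 : volume (⋃ i ∈ hA.toFinset, ball (o i) 1)
      = ∑ i ∈ hA.toFinset, volume (ball (o i) 1) :=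
    measure_biUnion_finset (by simpa [hA.coe_toFinset] using hdis)
      (fun i _ => measurableSet_ball)
  have h3 : ∑ i ∈ hA.toFinset, volume (ball (o i) 1)
      = (hA.toFinset.card : ℝ≥0∞) * ENNReal.ofReal (4 * Real.pi / 3) := by
    rw [Finset.sum_congr rfl (fun i _ => volume_unit_ball (o i)), Finset.sum_const,
      nsmul_eq_mul]
  have h4 : (hA.toFinset.card : ℝ≥0∞) * ENNReal.ofReal (4 * Real.pi / 3)
      ≤ ENNReal.ofReal V := by
    rw [← h3, ← h2, hset]; exact hUle.trans hvol
  rw [← ENNReal.ofReal_natCast, ← ENNReal.ofReal_mul (by positivity),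
    ENNReal.ofReal_le_ofReal_iff hV] at h4
  rwa [Set.ncard_eq_toFinset_card _ hA]

/-! ### Multiplicity bound for sums of measures -/

lemma sum_measure_le_card_mul {t : Finset ℕ} {A : ℕ → Set E3}
    (hA : ∀ i, MeasurableSet (A i)) (m : ℕ)
    (hm : ∀ x : E3, ∑ i ∈ t, (A i).indicator (fun _ => (1:ℝ≥0∞)) x ≤ m) :
    ∑ i ∈ t, volume (A i) ≤ (m : ℝ≥0∞) * volume (⋃ i ∈ t, A i) := by
  have hU : MeasurableSet (⋃ i ∈ t, A i) := t.measurableSet_biUnion (fun i _ => hA i)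
  calc ∑ i ∈ t, volume (A i)
      = ∑ i ∈ t, ∫⁻ x, (A i).indicator (fun _ => (1:ℝ≥0∞)) x := by
        refine Finset.sum_congr rfl fun i _ => ?_
        rw [lintegral_indicator_const (hA i), one_mul]
    _ = ∫⁻ x, ∑ i ∈ t, (A i).indicator (fun _ => (1:ℝ≥0∞)) x :=
        (lintegral_finset_sum t (fun i _ => measurable_const.indicator (hA i))).symm
    _ ≤ ∫⁻ x, (⋃ i ∈ t, A i).indicator (fun _ => (m:ℝ≥0∞)) x := by
        refine lintegral_mono fun x => ?_
        by_cases hx : x ∈ ⋃ i ∈ t, A i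
        · rw [Set.indicator_of_mem hx]
          exact hm x
        · rw [Set.indicator_of_notMem hx, Finset.sum_eq_zero]
          intro i hi
          exact Set.indicator_of_notMem (fun hxi => hx (Set.mem_biUnion hi hxi)) _
    _ = (m : ℝ≥0∞) * volume (⋃ i ∈ t, A i) := lintegral_indicator_const hU _

/-! ### The lens bound (parallelogram law) -/

lemma lens_subset {a b x : E3} (hd : 2 ≤ dist a b) (hxa : dist x a ≤ 101/100)
    (hxb : dist x b ≤ 1) : dist x ((2:ℝ)⁻¹ • (a + b)) ≤ 1003/10000 := by
  have key : x - (2:ℝ)⁻¹ • (a + b) = (2:ℝ)⁻¹ • ((x - a) + (x - b)) := by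
    module
  have h4 : dist x ((2:ℝ)⁻¹ • (a + b)) = 2⁻¹ * ‖(x - a) + (x - b)‖ := by
    rw [dist_eq_norm, key, norm_smul]
    norm_num
  have hp := parallelogram_law_with_norm ℝ (x - a) (x - b)
  have h3 : ‖(x - a) - (x - b)‖ = dist a b := by
    rw [show (x - a) - (x - b) = b - a by abel, ← dist_eq_norm, dist_comm]
  rw [h3, ← dist_eq_norm x a, ← dist_eq_norm x b] at hp
  have hnn : (0:ℝ) ≤ ‖(x - a) + (x - b)‖ := norm_nonneg _
  have hda : (0:ℝ) ≤ dist x a := dist_nonneg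
  have hdb : (0:ℝ) ≤ dist x b := dist_nonneg
  have hsq : ‖(x - a) + (x - b)‖ * ‖(x - a) + (x - b)‖ ≤ 402/10000 := by nlinarith
  nlinarith [h4, hsq, hnn]


/-! ### Wasted volume around each ball of a packing -/

lemma waste {o : ℕ → E3} (ho : ∀ i j, i ≠ j → 2 ≤ dist (o i) (o j)) (i : ℕ) :
    ENNReal.ofReal (4 * Real.pi / 3 * (1/500)) ≤
      volume (closedBall (o i) (101/100) \ ⋃ j, closedBall (o j) 1) := by
  classical
  have hπ := Real.pi_pos
  set W := closedBall (o i) (101/100) \ ⋃ j, closedBall (o j) 1 with hWdef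
  set R : Set ℕ := {j | j ≠ i ∧ dist (o i) (o j) ≤ 201/100} with hRdef
  have hRsub : ∀ j ∈ R, ball (o j) 1 ⊆ ball (o i) (301/100) := by
    intro j hj z hz
    rw [mem_ball] at hz ⊢
    have h1 := dist_triangle z (o j) (o i)
    have h2 := hj.2
    rw [dist_comm (o i) (o j)] at h2
    linarith
  obtain ⟨hRfin, hRcard⟩ := count_le ho hRsub
    (volume_ball3 (o i) (by norm_num : (0:ℝ) ≤ 301/100)).le (by positivity)
  have hR27 : R.ncard ≤ 27 := by
    have h28 : (R.ncard : ℝ) < 28 := by nlinarith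
    have : R.ncard < 28 := by exact_mod_cast h28
    omega
  have hcov : closedBall (o i) (101/100) ⊆
      (W ∪ closedBall (o i) 1) ∪
        ⋃ j ∈ hRfin.toFinset, closedBall ((2:ℝ)⁻¹ • (o i + o j)) (1003/10000) := by
    intro x hx
    by_cases hxU : x ∈ ⋃ j, closedBall (o j) 1
    · obtain ⟨j, hj⟩ := Set.mem_iUnion.mp hxU
      by_cases hxi : x ∈ closedBall (o i) 1
      · exact Or.inl (Or.inr hxi)
      · have hji : j ≠ i := fun h => hxi (h ▸ hj)
        have hdij : dist (o i) (o j) ≤ 201/100 := by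
          have h1 := dist_triangle (o i) x (o j)
          have h2 : dist (o i) x ≤ 101/100 := by
            rw [dist_comm]; exact mem_closedBall.mp hx
          have h3 : dist x (o j) ≤ 1 := mem_closedBall.mp hj
          linarith
        have hjR : j ∈ hRfin.toFinset := hRfin.mem_toFinset.mpr ⟨hji, hdij⟩
        refine Or.inr (Set.mem_biUnion hjR ?_)
        exact mem_closedBall.mpr (lens_subset (ho i j (Ne.symm hji))
          (mem_closedBall.mp hx) (mem_closedBall.mp hj))
    · exact Or.inl (Or.inl ⟨hx, hxU⟩)
  have h1 : volume (closedBall (o i) (101/100)) ≤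
      (volume W + volume (closedBall (o i) 1)) +
        ∑ j ∈ hRfin.toFinset, volume (closedBall ((2:ℝ)⁻¹ • (o i + o j)) (1003/10000)) := by
    refine (measure_mono hcov).trans ?_
    refine (measure_union_le _ _).trans ?_
    exact add_le_add (measure_union_le _ _) (measure_biUnion_finset_le _ _)
  have hsum : ∑ j ∈ hRfin.toFinset, volume (closedBall ((2:ℝ)⁻¹ • (o i + o j)) (1003/10000))
      ≤ ENNReal.ofReal (27 * (4 * Real.pi / 3 * (1003/10000)^3)) := by
    have hc : ∀ j ∈ hRfin.toFinset,
        volume (closedBall ((2:ℝ)⁻¹ • (o i + o j)) (1003/10000))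
          = ENNReal.ofReal (4 * Real.pi / 3 * (1003/10000)^3) := fun j _ =>
      volume_closedBall3 _ (by norm_num)
    rw [Finset.sum_congr rfl hc, Finset.sum_const, nsmul_eq_mul]
    have hcard : hRfin.toFinset.card ≤ 27 := by
      rw [← Set.ncard_eq_toFinset_card _ hRfin]; exact hR27
    calc (hRfin.toFinset.card : ℝ≥0∞) * ENNReal.ofReal (4 * Real.pi / 3 * (1003/10000)^3)
        ≤ (27 : ℝ≥0∞) * ENNReal.ofReal (4 * Real.pi / 3 * (1003/10000)^3) := by
          refine mul_le_mul_left ?_ _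
          exact_mod_cast Nat.cast_le.mpr hcard
      _ = ENNReal.ofReal (27 * (4 * Real.pi / 3 * (1003/10000)^3)) := by
          rw [ENNReal.ofReal_mul (by norm_num : (0:ℝ) ≤ 27), ENNReal.ofReal_ofNat]
  have h2 : ENNReal.ofReal (4 * Real.pi / 3 * (101/100)^3) ≤
      volume W + ENNReal.ofReal
        (4 * Real.pi / 3 * 1^3 + 27 * (4 * Real.pi / 3 * (1003/10000)^3)) := by
    rw [ENNReal.ofReal_add (by positivity) (by positivity),
      ← volume_closedBall3 (o i) (zero_le_one), ← add_assoc]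
    exact ((volume_closedBall3 (o i) (by norm_num : (0:ℝ) ≤ 101/100)).symm.le).trans
      (h1.trans (add_le_add_right hsum _))
  have h3 : ENNReal.ofReal (4 * Real.pi / 3 * (101/100)^3) -
      ENNReal.ofReal (4 * Real.pi / 3 * 1^3 + 27 * (4 * Real.pi / 3 * (1003/10000)^3))
        ≤ volume W := tsub_le_iff_right.mpr h2
  rw [← ENNReal.ofReal_sub _ (by positivity)] at h3
  refine le_trans (ENNReal.ofReal_le_ofReal ?_) h3
  nlinarith [hπ]

end St9

open scoped ENNReal NNReal Classical

/-- For a normal tiling,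
`0 < liminf (4π/3)·card{i : Bᵢ ⊆ C_L}/L³ ≤ limsup (4π/3)·card{i : Bᵢ ⊆ C_L}/L³ < 1`. -/
theorem density_liminf_pos_limsup_lt_one (T : NormalTiling) :
    0 < liminf (fun L : ℝ => (4 * Real.pi / 3) * (ballCount T L : ℝ) / L ^ 3) atTop ∧
    liminf (fun L : ℝ => (4 * Real.pi / 3) * (ballCount T L : ℝ) / L ^ 3) atTop ≤
      limsup (fun L : ℝ => (4 * Real.pi / 3) * (ballCount T L : ℝ) / L ^ 3) atTop ∧
    limsup (fun L : ℝ => (4 * Real.pi / 3) * (ballCount T L : ℝ) / L ^ 3) atTop < 1 := by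
  classical
  have hπ := Real.pi_pos
  set f : ℝ → ℝ := fun L : ℝ => (4 * Real.pi / 3) * (ballCount T L : ℝ) / L ^ 3 with hfdef
  have ho : ∀ i j, i ≠ j → 2 ≤ dist (T.o i) (T.o j) := by
    intro i j hij
    by_contra hlt
    push_neg at hlt
    have hball : ∀ k, ball (T.o k) 1 ⊆ interior (T.P k) := fun k =>
      interior_maximal (ball_subset_closedBall.trans (T.ball_subset k)) isOpen_ball
    have hm : midpoint ℝ (T.o i) (T.o j) ∈ ball (T.o i) 1 := by
      rw [mem_ball, dist_midpoint_left, Real.norm_two]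
      linarith
    have hm' : midpoint ℝ (T.o i) (T.o j) ∈ ball (T.o j) 1 := by
      rw [mem_ball, dist_midpoint_right, Real.norm_two]
      linarith
    exact Set.disjoint_left.mp (T.disjoint_interiors i j hij) (hball i hm) (hball j hm')
  obtain ⟨D0, hD0⟩ := T.bounded_diam
  set D := max D0 2 with hDdef
  have hD2 : (2:ℝ) ≤ D := le_max_right _ _
  have hdiam : ∀ i, diam (T.P i) ≤ D := fun i => (hD0 i).trans (le_max_left _ _)
  have hcount : ∀ L : ℝ,
      (ballCount T L : ℝ) = ({i : ℕ | closedBall (T.o i) 1 ⊆ cube L}.ncard : ℝ) := by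
    intro L
    rw [ballCount, Nat.card_coe_set_eq]
  -- Lower bound
  have hLB : ∀ L : ℝ, 4 * D + 4 ≤ L → 1 / (8 * D^3) ≤ f L := by
    intro L hL
    have hD0' : (0:ℝ) < D := by linarith
    have hL0 : (0:ℝ) < L := by nlinarith
    set S := {i : ℕ | closedBall (T.o i) 1 ⊆ cube L} with hSdef
    obtain ⟨hfin, -⟩ := St9.count_le (A := S) (V := L^3) ho
      (fun i hi => ball_subset_closedBall.trans hi)
      (St9.volume_cube hL0.le).le (by positivity)
    have hcover : cube (L - 2*(D+1)) ⊆ ⋃ i ∈ S, T.P i := by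
      intro x hx
      have hxU : x ∈ ⋃ i, T.P i := by rw [T.iUnion_eq]; trivial
      obtain ⟨i, hxi⟩ := Set.mem_iUnion.mp hxU
      refine Set.mem_biUnion (show closedBall (T.o i) 1 ⊆ cube L from ?_) hxi
      intro y hy
      have hoi : T.o i ∈ T.P i := T.ball_subset i (mem_closedBall_self zero_le_one)
      have h1 : dist (T.o i) x ≤ D :=
        (dist_le_diam_of_mem (T.isCompact i).isBounded hoi hxi).trans (hdiam i)
      have h2 : dist y x ≤ D + 1 := by
        have h3 : dist y (T.o i) ≤ 1 := mem_closedBall.mp hy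
        have h4 := dist_triangle y (T.o i) x
        linarith
      have h5 := St9.cube_absorb hx h2
      rwa [show L - 2*(D+1) + 2*(D+1) = L by ring] at h5
    have hinner : ENNReal.ofReal ((L - 2*(D+1))^3) ≤
        (hfin.toFinset.card : ℝ≥0∞) * ENNReal.ofReal (4*Real.pi/3 * D^3) := by
      calc ENNReal.ofReal ((L - 2*(D+1))^3) = volume (cube (L - 2*(D+1))) :=
            (St9.volume_cube (by linarith)).symm
        _ ≤ volume (⋃ i ∈ S, T.P i) := measure_mono hcover
        _ = volume (⋃ i ∈ hfin.toFinset, T.P i) := by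
            congr 1; ext z; simp [hfin.mem_toFinset]
        _ ≤ ∑ i ∈ hfin.toFinset, volume (T.P i) := measure_biUnion_finset_le _ _
        _ ≤ ∑ _i ∈ hfin.toFinset, ENNReal.ofReal (4*Real.pi/3 * D^3) := by
            refine Finset.sum_le_sum fun i _ => ?_
            have hsub : T.P i ⊆ closedBall (T.o i) D := by
              intro y hy
              exact mem_closedBall.mpr ((dist_le_diam_of_mem (T.isCompact i).isBounded hy
                (T.ball_subset i (mem_closedBall_self zero_le_one))).trans (hdiam i))
            exact (measure_mono hsub).trans_eq (St9.volume_closedBall3 _ (by linarith))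
        _ = _ := by rw [Finset.sum_const, nsmul_eq_mul]
    have hreal : (L - 2*(D+1))^3 ≤ (hfin.toFinset.card : ℝ) * (4*Real.pi/3 * D^3) := by
      rw [← ENNReal.ofReal_natCast, ← ENNReal.ofReal_mul (by positivity),
        ENNReal.ofReal_le_ofReal_iff (by positivity)] at hinner
      exact hinner
    have hcard : (ballCount T L : ℝ) = (hfin.toFinset.card : ℝ) := by
      rw [hcount L, ← hSdef, Set.ncard_eq_toFinset_card _ hfin]
    show 1 / (8 * D^3) ≤ 4 * Real.pi / 3 * (ballCount T L : ℝ) / L ^ 3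
    rw [hcard, le_div_iff₀ (by positivity : (0:ℝ) < L^3),
      show (1:ℝ) / (8*D^3) * L^3 = L^3 / (8*D^3) by ring,
      div_le_iff₀ (by positivity : (0:ℝ) < 8*D^3)]
    have hhalf : L/2 ≤ L - 2*(D+1) := by linarith
    have h3 : (L/2)^3 ≤ (hfin.toFinset.card : ℝ) * (4*Real.pi/3 * D^3) :=
      (pow_le_pow_left₀ (by linarith) hhalf 3).trans hreal
    nlinarith [h3]
  -- Upper bound
  have hUB : ∀ L : ℝ, 10^6 ≤ L → f L ≤ 9001/9002 := by
    intro L hL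
    have hL0 : (0:ℝ) < L := lt_of_lt_of_le (by norm_num) hL
    set S := {i : ℕ | closedBall (T.o i) 1 ⊆ cube L} with hSdef
    obtain ⟨hfin, -⟩ := St9.count_le (A := S) (V := L^3) ho
      (fun i hi => ball_subset_closedBall.trans hi)
      (St9.volume_cube hL0.le).le (by positivity)
    set t := hfin.toFinset with htdef
    set W : ℕ → Set E3 :=
      fun k => closedBall (T.o k) (101/100) \ ⋃ j, closedBall (T.o j) 1 with hWdef
    have hWmeas : ∀ k, MeasurableSet (W k) := fun k =>
      measurableSet_closedBall.diff (MeasurableSet.iUnion fun j => measurableSet_closedBall)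
    have htS : ∀ i ∈ t, closedBall (T.o i) 1 ⊆ cube L := fun i hi => hfin.mem_toFinset.mp hi
    have hWsub : ∀ i ∈ t, W i ⊆ cube (L + 1/50) := by
      intro i hi x hxW j
      have hcj : |T.o i j| ≤ L/2 - 1 := St9.center_coord (htS i hi) j
      have hdx : dist x (T.o i) ≤ 101/100 := mem_closedBall.mp hxW.1
      have h1 := St9.dist_coord x (T.o i) j
      have h2 : |x j| ≤ |T.o i j| + |x j - T.o i j| := by
        calc |x j| = |T.o i j + (x j - T.o i j)| := by ring_nf
          _ ≤ _ := abs_add_le _ _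
      linarith
    have hVsub : ∀ i ∈ t, ball (T.o i) 1 ⊆ cube (L + 1/50) := fun i hi =>
      (ball_subset_closedBall.trans (htS i hi)).trans (St9.cube_mono (by norm_num))
    have hdisUV : Disjoint (⋃ i ∈ t, W i) (⋃ i ∈ t, ball (T.o i) 1) := by
      rw [Set.disjoint_left]
      intro x hx hx'
      obtain ⟨i, -, hWi⟩ := Set.mem_iUnion₂.mp hx
      obtain ⟨j, -, hbj⟩ := Set.mem_iUnion₂.mp hx'
      exact hWi.2 (Set.mem_iUnion.mpr ⟨j, ball_subset_closedBall hbj⟩)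
    have hUV : volume (⋃ i ∈ t, W i) + volume (⋃ i ∈ t, ball (T.o i) 1)
        ≤ ENNReal.ofReal ((L + 1/50)^3) := by
      rw [← measure_union hdisUV (t.measurableSet_biUnion fun i _ => measurableSet_ball)]
      refine (measure_mono (Set.union_subset (Set.iUnion₂_subset hWsub)
        (Set.iUnion₂_subset hVsub))).trans ?_
      exact (St9.volume_cube (by linarith)).le
    have hVeq : volume (⋃ i ∈ t, ball (T.o i) 1)
        = (t.card : ℝ≥0∞) * ENNReal.ofReal (4*Real.pi/3) := by
      rw [measure_biUnion_finset
        (fun i _ j _ hij => ball_disjoint_ball (by linarith [ho i j hij]))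
        (fun i _ => measurableSet_ball)]
      rw [Finset.sum_congr rfl (fun i _ => St9.volume_unit_ball _), Finset.sum_const,
        nsmul_eq_mul]
    have hmult : ∀ x : E3, ∑ i ∈ t, (W i).indicator (fun _ => (1:ℝ≥0∞)) x ≤ (9:ℕ) := by
      intro x
      have hsum : ∑ i ∈ t, (W i).indicator (fun _ => (1:ℝ≥0∞)) x
          = ((t.filter (fun i => x ∈ W i)).card : ℝ≥0∞) := by
        simp only [Set.indicator_apply]; rw [Finset.sum_boole]
      rw [hsum]
      set t' := t.filter (fun i => x ∈ W i) with ht'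
      have hsub' : ∀ i ∈ (↑t' : Set ℕ), ball (T.o i) 1 ⊆ ball x (201/100) := by
        intro i hi z hz
        have hxWi : x ∈ W i := (Finset.mem_filter.mp hi).2
        have h1 : dist x (T.o i) ≤ 101/100 := mem_closedBall.mp hxWi.1
        rw [mem_ball] at hz ⊢
        have h2 := dist_triangle z (T.o i) x
        rw [dist_comm x (T.o i)] at h1
        linarith
      obtain ⟨-, hcard⟩ := St9.count_le ho hsub'
        (St9.volume_ball3 x (by norm_num : (0:ℝ) ≤ 201/100)).le (by positivity)
      rw [Set.ncard_coe_finset] at hcard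
      have h9 : (t'.card : ℝ) < 10 := by nlinarith
      have h10 : t'.card < 10 := by exact_mod_cast h9
      exact_mod_cast (by omega : t'.card ≤ 9)
    have hWsum : (t.card : ℝ≥0∞) * ENNReal.ofReal (4*Real.pi/3 * (1/500))
        ≤ 9 * volume (⋃ i ∈ t, W i) := by
      calc (t.card : ℝ≥0∞) * ENNReal.ofReal (4*Real.pi/3 * (1/500))
          = ∑ _i ∈ t, ENNReal.ofReal (4*Real.pi/3 * (1/500)) := by
            rw [Finset.sum_const, nsmul_eq_mul]
        _ ≤ ∑ i ∈ t, volume (W i) := Finset.sum_le_sum (fun i _ => St9.waste ho i)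
        _ ≤ (9:ℝ≥0∞) * volume (⋃ i ∈ t, W i) := by
            have h := St9.sum_measure_le_card_mul hWmeas 9 hmult
            simpa using h
    have hcomb : (t.card : ℝ≥0∞) * ENNReal.ofReal (4*Real.pi/3 * (1/500) + 9 * (4*Real.pi/3))
        ≤ ENNReal.ofReal (9 * (L + 1/50)^3) := by
      rw [ENNReal.ofReal_add (by positivity) (by positivity), mul_add]
      have h9V : (t.card : ℝ≥0∞) * ENNReal.ofReal (9 * (4*Real.pi/3))
          = 9 * volume (⋃ i ∈ t, ball (T.o i) 1) := by
        rw [hVeq, ENNReal.ofReal_mul (by norm_num : (0:ℝ) ≤ 9), ENNReal.ofReal_ofNat]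
        ring
      rw [h9V]
      calc (t.card : ℝ≥0∞) * ENNReal.ofReal (4*Real.pi/3*(1/500))
            + 9 * volume (⋃ i ∈ t, ball (T.o i) 1)
          ≤ 9 * volume (⋃ i ∈ t, W i) + 9 * volume (⋃ i ∈ t, ball (T.o i) 1) :=
            add_le_add_left hWsum _
        _ = 9 * (volume (⋃ i ∈ t, W i) + volume (⋃ i ∈ t, ball (T.o i) 1)) := by ring
        _ ≤ 9 * ENNReal.ofReal ((L+1/50)^3) := mul_le_mul_right hUV 9
        _ = ENNReal.ofReal (9 * (L+1/50)^3) := by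
            rw [ENNReal.ofReal_mul (by norm_num : (0:ℝ) ≤ 9), ENNReal.ofReal_ofNat]
    have hreal : (t.card : ℝ) * (4*Real.pi/3 * (1/500) + 9 * (4*Real.pi/3))
        ≤ 9 * (L + 1/50)^3 := by
      rw [← ENNReal.ofReal_natCast, ← ENNReal.ofReal_mul (by positivity),
        ENNReal.ofReal_le_ofReal_iff (by positivity)] at hcomb
      exact hcomb
    have hcube3 : (L + 1/50)^3 ≤ (9001/9000) * L^3 := by
      nlinarith [mul_nonneg (mul_nonneg (sub_nonneg.mpr hL) hL0.le) hL0.le,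
        mul_nonneg (sub_nonneg.mpr hL) hL0.le, hL]
    have hcardn : (ballCount T L : ℝ) = (t.card : ℝ) := by
      rw [hcount L, ← hSdef, htdef, Set.ncard_eq_toFinset_card _ hfin]
    show 4 * Real.pi / 3 * (ballCount T L : ℝ) / L ^ 3 ≤ 9001/9002
    rw [hcardn, div_le_iff₀ (by positivity : (0:ℝ) < L^3)]
    nlinarith [hreal, hcube3, (Nat.cast_nonneg t.card : (0:ℝ) ≤ (t.card:ℝ))]
  -- Assembly
  have hD0' : (0:ℝ) < D := by linarith
  have hlbF : ∀ᶠ L in atTop, 1/(8*D^3) ≤ f L := eventually_atTop.mpr ⟨4*D+4, hLB⟩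
  have hubF : ∀ᶠ L in atTop, f L ≤ 9001/9002 := eventually_atTop.mpr ⟨10^6, hUB⟩
  have hbdd : IsBoundedUnder (· ≤ ·) atTop f := isBoundedUnder_of_eventually_le hubF
  have hbdd' : IsBoundedUnder (· ≥ ·) atTop f := isBoundedUnder_of_eventually_ge hlbF
  refine ⟨?_, ?_, ?_⟩
  · have h := le_liminf_of_le hbdd.isCoboundedUnder_ge hlbF
    have hpos : (0:ℝ) < 1/(8*D^3) := by positivity
    exact lt_of_lt_of_le hpos h
  · exact liminf_le_limsup hbdd hbdd'
  · exact lt_of_le_of_lt (limsup_le_of_le hbdd'.isCoboundedUnder_le hubF) (by norm_num)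
end
end
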